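/- For a smooth function f and grid values f_j = f(x_j) with x_j = jΔx, the smoothness indicators β₀⁺ = ((f_{j+1} − 2f_j + f_{j−1})/Δx)² and β₁⁺ = ((f_{j+2} − 2f_{j+1} + f_j)/Δx)² satisfy, as Δx → 0: β_k⁺ = Δx² f''(x_j)² + O(Δx³) for k = 0, 1; consequently β₀⁺ − β₁⁺ = O(Δx³). -/

import Mathlib

open Set

lemma taylor2_eval {F : ℝ → ℝ} {U : Set ℝ} (hU : IsOpen U) (hF : ContDiffOn ℝ 3 F U)
    {a b : ℝ} (hab : a < b) (hs : Icc a b ⊆ U) (y : ℝ) :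
    taylorWithinEval F 2 (Icc a b) a y
      = F a + (y - a) * deriv F a + (y - a)^2 / 2 * deriv (deriv F) a := by
  have hud : UniqueDiffOn ℝ (Icc a b) := uniqueDiffOn_Icc hab
  have ha : a ∈ Icc a b := left_mem_Icc.2 hab.le
  have hdiff : ∀ z ∈ Icc a b, DifferentiableAt ℝ F z := fun z hz =>
    (hF.contDiffAt (hU.mem_nhds (hs hz))).differentiableAt (by norm_num)
  have h1 : EqOn (iteratedDerivWithin 1 F (Icc a b)) (deriv F) (Icc a b) := fun z hz => by
    rw [iteratedDerivWithin_one]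
    exact (hdiff z hz).derivWithin (hud z hz)
  have hF' : ContDiffOn ℝ 2 (deriv F) U := hF.deriv_of_isOpen hU (by norm_num)
  have hdiff' : DifferentiableAt ℝ (deriv F) a :=
    (hF'.contDiffAt (hU.mem_nhds (hs ha))).differentiableAt (by norm_num)
  have h2 : iteratedDerivWithin 2 F (Icc a b) a = deriv (deriv F) a := by
    rw [iteratedDerivWithin_succ, derivWithin_congr h1 (h1 ha)]
    exact hdiff'.derivWithin (hud a ha)
  rw [taylor_within_apply]
  simp [Finset.sum_range_succ, h1 ha, h2]
  exact Or.inl (by ring)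

lemma taylor2_bound {F : ℝ → ℝ} {U : Set ℝ} (hU : IsOpen U) (hF : ContDiffOn ℝ 3 F U)
    {a b : ℝ} (hab : a < b) (hs : Icc a b ⊆ U) :
    ∃ C, ∀ y ∈ Icc a b,
      |F y - (F a + (y - a) * deriv F a + (y - a)^2 / 2 * deriv (deriv F) a)| ≤ C * (y - a)^3 := by
  obtain ⟨C, hC⟩ := exists_taylor_mean_remainder_bound (n := 2) hab.le (hF.mono hs)
  refine ⟨C, fun y hy => ?_⟩
  have h := hC y hy
  rw [taylor2_eval hU hF hab hs y] at h
  simpa [Real.norm_eq_abs] using h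

lemma sq_diff_est {D h b e C δ : ℝ} (hh : 0 < h) (hhδ : h ≤ δ)
    (hD : D = h^2*b + e) (he : |e| ≤ C * h^3) :
    |(D/h)^2 - h^2*b^2| ≤ C*(2*|b| + C*δ)*h^3 := by
  have hC : 0 ≤ C := by nlinarith [abs_nonneg e, pow_pos hh 3]
  have h1 : (D/h)^2 - h^2*b^2 = (e/h) * (2*h*b + e/h) := by
    field_simp [hD]; rw [hD]; ring
  have h2 : |e/h| ≤ C * h^2 := by
    rw [abs_div, abs_of_pos hh, div_le_iff₀ hh]
    calc |e| ≤ C*h^3 := he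
    _ = C*h^2*h := by ring
  have h3 : |2*h*b + e/h| ≤ (2*|b| + C*δ)*h := by
    have : |2*h*b| = 2*h*|b| := by
      rw [abs_mul, abs_mul, abs_two, abs_of_pos hh]
    calc |2*h*b + e/h| ≤ |2*h*b| + |e/h| := abs_add_le _ _
    _ ≤ 2*h*|b| + C*h^2 := by rw [this]; linarith
    _ ≤ (2*|b| + C*δ)*h := by nlinarith [abs_nonneg b, mul_nonneg hC hh.le]
  rw [h1, abs_mul]
  calc |e/h| * |2*h*b+e/h| ≤ (C*h^2) * ((2*|b|+C*δ)*h) :=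
    mul_le_mul h2 h3 (abs_nonneg _) (by positivity)
  _ = C*(2*|b|+C*δ)*h^3 := by ring

set_option maxHeartbeats 1000000 in
/-- For a `C⁴` function `f` near `x`, the `r = 2` WENO smoothness indicators
`β₀⁺ = ((f(x+Δx) − 2f(x) + f(x−Δx))/Δx)²` and
`β₁⁺ = ((f(x+2Δx) − 2f(x+Δx) + f(x))/Δx)²` satisfy
`β_k⁺ = Δx² f''(x)² + O(Δx³)`, hence `β₀⁺ − β₁⁺ = O(Δx³)`. -/
theorem smoothness_indicators_of_smooth_function
    (f : ℝ → ℝ) (Ω : Set ℝ) (x : ℝ) (hΩ : IsOpen Ω) (hx : x ∈ Ω)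
    (hf : ContDiffOn ℝ 4 f Ω) :
    ∃ C > (0:ℝ), ∃ ε > (0:ℝ), ∀ Δx : ℝ, 0 < Δx → Δx < ε →
      |((f (x + Δx) - 2 * f x + f (x - Δx)) / Δx) ^ 2
        - Δx ^ 2 * (deriv (deriv f) x) ^ 2| ≤ C * Δx ^ 3 ∧
      |((f (x + 2 * Δx) - 2 * f (x + Δx) + f x) / Δx) ^ 2
        - Δx ^ 2 * (deriv (deriv f) x) ^ 2| ≤ C * Δx ^ 3 ∧
      |((f (x + Δx) - 2 * f x + f (x - Δx)) / Δx) ^ 2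
        - ((f (x + 2 * Δx) - 2 * f (x + Δx) + f x) / Δx) ^ 2| ≤ C * Δx ^ 3 := by
  have hf3 : ContDiffOn ℝ 3 f Ω := hf.of_le (by norm_num)
  obtain ⟨ε₀, hε₀, hball⟩ := Metric.isOpen_iff.1 hΩ x hx
  set δ := ε₀ / 5 with hδdef
  have hδ : 0 < δ := by positivity
  have hsub : Icc (x - 2*δ) (x + 2*δ) ⊆ Ω := by
    intro y hy
    apply hball
    rw [Metric.mem_ball, Real.dist_eq]
    rw [mem_Icc] at hy
    rw [abs_lt]
    constructor <;> [linarith; linarith]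
  -- forward Taylor bound
  have hab1 : x < x + 2*δ := by linarith
  have hs1 : Icc x (x + 2*δ) ⊆ Ω := fun y hy => hsub ⟨by linarith [hy.1], hy.2⟩
  obtain ⟨C₁, hC₁⟩ := taylor2_bound hΩ hf3 hab1 hs1
  -- backward Taylor bound via reflection g t = f (x - t)
  set g : ℝ → ℝ := f ∘ (fun t => x - t) with hgdef
  set U' : Set ℝ := (fun t => x - t) ⁻¹' Ω with hU'def
  have hU' : IsOpen U' := hΩ.preimage (continuous_const.sub continuous_id)
  have hg : ContDiffOn ℝ 3 g U' :=
    hf3.comp ((contDiff_const.sub contDiff_id).contDiffOn) (fun t ht => ht)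
  have hab2 : (0:ℝ) < 2*δ := by linarith
  have hs2 : Icc (0:ℝ) (2*δ) ⊆ U' := by
    intro t ht
    rw [mem_Icc] at ht
    have : x - t ∈ Icc (x - 2*δ) (x + 2*δ) := ⟨by linarith [ht.2], by linarith [ht.1]⟩
    exact hsub this
  obtain ⟨C₂, hC₂⟩ := taylor2_bound hU' hg hab2 hs2
  -- derivatives of g at 0
  have hgiter : ∀ n t, iteratedDeriv n g t = (-1:ℝ)^n * iteratedDeriv n f (x - t) := by
    intro n t
    have he : g = fun t => (fun u => f (x + u)) (-t) := by
      funext s; simp [hgdef, sub_eq_add_neg]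
    have h1 : iteratedDeriv n g t = (-1:ℝ)^n • iteratedDeriv n (fun u => f (x + u)) (-t) := by
      rw [he]; exact iteratedDeriv_comp_neg n (fun u => f (x + u)) t
    rw [h1, iteratedDeriv_comp_const_add]
    simp [sub_eq_add_neg]
  have hg1 : deriv g 0 = -deriv f x := by
    have := hgiter 1 0
    simpa [iteratedDeriv_one] using this
  have hg2 : deriv (deriv g) 0 = deriv (deriv f) x := by
    have h2 := hgiter 2 0
    rw [iteratedDeriv_succ, iteratedDeriv_one, iteratedDeriv_succ, iteratedDeriv_one] at h2
    simpa using h2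
  have hg0 : g 0 = f x := by simp [hgdef]
  -- notation
  set b2 := deriv (deriv f) x with hb2
  set b1 := deriv f x with hb1
  set K := |C₁| + |C₂| + 1 with hK
  have hKpos : (0:ℝ) < K := by positivity
  set A := 100*K*(2*|b2| + 100*K*δ) with hA
  have hAnn : 0 ≤ A := by positivity
  refine ⟨2*A + 1, by linarith, δ, hδ, fun h hh hhδ => ?_⟩
  -- Taylor error terms
  have hE0 : |f (x + h) - (f x + h * b1 + h^2/2 * b2)| ≤ 10*K * h^3 := by
    have := hC₁ (x + h) ⟨by linarith, by linarith⟩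
    simp only [add_sub_cancel_left] at this
    have hle : C₁ ≤ 10*K := by
      have : C₁ ≤ |C₁| := le_abs_self _
      rw [hK]; nlinarith [abs_nonneg C₁, abs_nonneg C₂]
    calc |f (x + h) - (f x + h * b1 + h^2/2 * b2)| ≤ C₁ * h^3 := this
    _ ≤ 10*K * h^3 := by nlinarith [pow_pos hh 3]
  have hE2 : |f (x + 2*h) - (f x + 2*h * b1 + 2*h^2 * b2)| ≤ 80*K * h^3 := by
    have := hC₁ (x + 2*h) ⟨by linarith, by linarith⟩
    simp only [add_sub_cancel_left] at this
    have heq : f x + 2*h * b1 + (2*h)^2/2 * b2 = f x + 2*h * b1 + 2*h^2 * b2 := by ring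
    rw [heq] at this
    have hle : C₁ ≤ 10*K := by
      have : C₁ ≤ |C₁| := le_abs_self _
      rw [hK]; nlinarith [abs_nonneg C₁, abs_nonneg C₂]
    calc |f (x + 2*h) - (f x + 2*h * b1 + 2*h^2 * b2)| ≤ C₁ * (2*h)^3 := this
    _ ≤ 80*K * h^3 := by nlinarith [pow_pos hh 3]
  have hEm : |f (x - h) - (f x - h * b1 + h^2/2 * b2)| ≤ 10*K * h^3 := by
    have := hC₂ h ⟨hh.le, by linarith⟩
    rw [hg0, hg1, hg2] at this
    simp only [sub_zero] at this
    have heq : f x + h * -b1 + h^2/2 * b2 = f x - h * b1 + h^2/2 * b2 := by ring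
    have hgh : g h = f (x - h) := by simp [hgdef]
    rw [hgh, heq] at this
    have hle : C₂ ≤ 10*K := by
      have : C₂ ≤ |C₂| := le_abs_self _
      rw [hK]; nlinarith [abs_nonneg C₁, abs_nonneg C₂]
    calc |f (x - h) - (f x - h * b1 + h^2/2 * b2)| ≤ C₂ * h^3 := this
    _ ≤ 10*K * h^3 := by nlinarith [pow_pos hh 3]
  -- decompose second differences
  set e0 := f (x + h) - (f x + h * b1 + h^2/2 * b2) with he0
  set e2 := f (x + 2*h) - (f x + 2*h * b1 + 2*h^2 * b2) with he2
  set em := f (x - h) - (f x - h * b1 + h^2/2 * b2) with hem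
  have hD0 : f (x + h) - 2 * f x + f (x - h) = h^2 * b2 + (e0 + em) := by
    rw [he0, hem]; ring_nf
  have hD1 : f (x + 2*h) - 2 * f (x + h) + f x = h^2 * b2 + (e2 - 2*e0) := by
    rw [he0, he2]; ring_nf
  have hb0 : |e0 + em| ≤ (100*K) * h^3 := by
    calc |e0 + em| ≤ |e0| + |em| := abs_add_le _ _
    _ ≤ 10*K*h^3 + 10*K*h^3 := by linarith
    _ ≤ (100*K) * h^3 := by nlinarith [pow_pos hh 3]
  have hb1' : |e2 - 2*e0| ≤ (100*K) * h^3 := by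
    calc |e2 - 2*e0| ≤ |e2| + |2*e0| := abs_sub _ _
    _ ≤ 80*K*h^3 + 2*(10*K*h^3) := by
        have : |2*e0| = 2*|e0| := by rw [abs_mul]; simp
        rw [this]; linarith
    _ ≤ (100*K) * h^3 := by nlinarith [pow_pos hh 3]
  have est0 : |((f (x + h) - 2 * f x + f (x - h)) / h) ^ 2 - h ^ 2 * b2 ^ 2| ≤ A * h^3 := by
    have := sq_diff_est hh hhδ.le hD0 hb0
    calc |((f (x + h) - 2 * f x + f (x - h)) / h) ^ 2 - h ^ 2 * b2 ^ 2|
        ≤ 100*K*(2*|b2| + 100*K*δ)*h^3 := this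
    _ = A * h^3 := by rw [hA]
  have est1 : |((f (x + 2*h) - 2 * f (x + h) + f x) / h) ^ 2 - h ^ 2 * b2 ^ 2| ≤ A * h^3 := by
    have := sq_diff_est hh hhδ.le hD1 hb1'
    calc |((f (x + 2*h) - 2 * f (x + h) + f x) / h) ^ 2 - h ^ 2 * b2 ^ 2|
        ≤ 100*K*(2*|b2| + 100*K*δ)*h^3 := this
    _ = A * h^3 := by rw [hA]
  have hh3 : (0:ℝ) < h^3 := pow_pos hh 3
  refine ⟨by nlinarith, by nlinarith, ?_⟩
  calc |((f (x + h) - 2 * f x + f (x - h)) / h) ^ 2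
        - ((f (x + 2*h) - 2 * f (x + h) + f x) / h) ^ 2|
      ≤ |((f (x + h) - 2 * f x + f (x - h)) / h) ^ 2 - h ^ 2 * b2 ^ 2|
        + |((f (x + 2*h) - 2 * f (x + h) + f x) / h) ^ 2 - h ^ 2 * b2 ^ 2| := by
        have t1 := abs_sub_le (((f (x + h) - 2 * f x + f (x - h)) / h) ^ 2) (h ^ 2 * b2 ^ 2)
          (((f (x + 2*h) - 2 * f (x + h) + f x) / h) ^ 2)
        rw [abs_sub_comm (h ^ 2 * b2 ^ 2)] at t1
        exact t1
  _ ≤ A * h^3 + A * h^3 := by linarith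
  _ ≤ (2*A + 1) * h^3 := by nlinarith
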